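/- Let x ∈ A^ℤ be an aperiodic linearly recurrent sequence with constant K. Then the factor complexity of x satisfies p_x(n) ≤ K·n for all n ≥ 1. -/

import Mathlib

open List

/-- Extension of a substitution to words. -/
def applyW {A : Type*} (σ : A → List A) (w : List A) : List A := w.flatMap σ

/-- `σⁿ` as a map on letters. -/
def powL {A : Type*} (σ : A → List A) (n : ℕ) (a : A) : List A := (applyW σ)^[n] [a]

/-- `σⁿ` as a map on words. -/
def iterW {A : Type*} (σ : A → List A) (n : ℕ) (w : List A) : List A := (applyW σ)^[n] w

/-- A substitution is non-erasing if no letter maps to the empty word. -/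
def NonErasing {A : Type*} (σ : A → List A) : Prop := ∀ a, σ a ≠ []

/-- A substitution is primitive if some power maps any letter to a word containing
every letter. -/
def PrimitiveSub {A : Type*} (σ : A → List A) : Prop :=
  ∃ k : ℕ, ∀ b c : A, b ∈ powL σ k c

/-- `σ` is prolongable on `a` if `σ a = a u` with `u` nonempty. -/
def Prolongable {A : Type*} (σ : A → List A) (a : A) : Prop :=
  ∃ u : List A, u ≠ [] ∧ σ a = a :: u

/-- `|σⁿ|`, the maximal length of the image of a letter under `σⁿ`. -/
def maxLen {A : Type*} [Fintype A] (σ : A → List A) (n : ℕ) : ℕ :=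
  Finset.univ.sup fun a => (powL σ n a).length

/-- `⟨σⁿ⟩`, the minimal length of the image of a letter under `σⁿ`. -/
def minLen {A : Type*} [Fintype A] [Nonempty A] (σ : A → List A) (n : ℕ) : ℕ :=
  Finset.univ.inf' Finset.univ_nonempty fun a => (powL σ n a).length

/-- The factor `x_{[i,j)}` of a two-sided sequence. -/
def seg {A : Type*} (x : ℤ → A) (i j : ℤ) : List A :=
  (List.range (j - i).toNat).map fun t => x (i + t)

/-- `w` is a factor of the two-sided sequence `x`. -/
def FactorOf {A : Type*} (x : ℤ → A) (w : List A) : Prop :=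
  ∃ i : ℤ, w = seg x i (i + w.length)

/-- The language of a substitution: words occurring in some `σⁿ(c)`. -/
def LangOf {A : Type*} (σ : A → List A) (w : List A) : Prop :=
  ∃ n : ℕ, ∃ c : A, w <:+: powL σ n c

/-- The map `f^{(1)}` associated with the substitution `τ` and the sequence `x`;
the map `f^{(p)}` of `σ` is obtained as `F (powL σ p) x`. -/
def F {A : Type*} (τ : A → List A) (x : ℤ → A) (i : ℤ) : ℤ :=
  if 0 ≤ i then (((seg x 0 i).flatMap τ).length : ℤ)
  else -(((seg x i 0).flatMap τ).length : ℤ)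

/-- `x` is a (two-sided) fixed point of `τ`:  `τ (x i)` is the block of `x`
between `f^{(1)}(i)` and `f^{(1)}(i+1)`. -/
def IsFixedPoint {A : Type*} (τ : A → List A) (x : ℤ → A) : Prop :=
  ∀ i : ℤ, seg x (F τ x i) (F τ x (i + 1)) = τ (x i)

/-- `x` is an admissible fixed point of `τ`: it is a fixed point and the word
`x₋₁x₀` occurs in some `τⁿ(c)`. -/
def Admissible {A : Type*} (τ : A → List A) (x : ℤ → A) : Prop :=
  IsFixedPoint τ x ∧ ∃ n : ℕ, ∃ c : A, [x (-1), x 0] <:+: powL τ n c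

/-- `τ` is recognizable on `x` with constant `L`. -/
def RecogWith {A : Type*} (τ : A → List A) (x : ℤ → A) (L : ℤ) : Prop :=
  0 < L ∧ ∀ i m : ℤ,
    seg x (m - L) (m + L + 1) = seg x (F τ x i - L) (F τ x i + L + 1) →
    ∃ j : ℤ, m = F τ x j ∧ x i = x j

/-- `x` is `k`-power-free: no nonempty word `w` has `w^k` as a factor of `x`. -/
def PowerFree {A : Type*} (x : ℤ → A) (k : ℕ) : Prop :=
  ∀ w : List A, w ≠ [] → ¬ FactorOf x (List.replicate k w).flatten

/-- `x` is recurrent: every factor occurs infinitely many times. -/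
def Recurrent {A : Type*} (x : ℤ → A) : Prop :=
  ∀ w : List A, FactorOf x w → ∀ N : ℤ, ∃ i : ℤ, N ≤ i ∧ w = seg x i (i + w.length)

/-- Number of occurrences of `u` in `w`. -/
def occCount {A : Type*} [DecidableEq A] (u w : List A) : ℕ :=
  (List.range (w.length + 1)).countP fun i => decide (u <+: w.drop i)

/-- `r` is a return word to `u` in `x`. -/
def ReturnWordOf {A : Type*} [DecidableEq A] (x : ℤ → A) (u r : List A) : Prop :=
  FactorOf x (r ++ u) ∧ u <+: (r ++ u) ∧ occCount u (r ++ u) = 2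

/-- `r` is a return word to `u` in the language of `σ`. -/
def ReturnWordLang {A : Type*} [DecidableEq A] (σ : A → List A) (u r : List A) : Prop :=
  LangOf σ (r ++ u) ∧ u <+: (r ++ u) ∧ occCount u (r ++ u) = 2

/-- `x` is linearly recurrent with constant `K`. -/
def LinRec {A : Type*} [DecidableEq A] (x : ℤ → A) (K : ℕ) : Prop :=
  Recurrent x ∧ ∀ u r : List A, FactorOf x u → ReturnWordOf x u r → r.length ≤ K * u.length

/-- `x` is aperiodic (not periodic). -/
def AperiodicSeq {A : Type*} (x : ℤ → A) : Prop :=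
  ¬ ∃ p : ℤ, 0 < p ∧ ∀ i : ℤ, x (i + p) = x i

/-- Factor complexity of `x`. -/
noncomputable def complexity {A : Type*} (x : ℤ → A) (n : ℕ) : ℕ :=
  Set.ncard {w : List A | FactorOf x w ∧ w.length = n}

set_option linter.unusedVariables false
set_option linter.unusedSectionVars false

section
variable {A : Type*} (x : ℤ → A)

lemma flatMap_single (l : List ℕ) : (l.flatMap fun a => [(a:ℤ)]) = l.map (fun a : ℕ => (a:ℤ)) := by
  induction l with
  | nil => rfl
  | cons a l ih => simp; exact Eq.symm map_eq_flatMap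

lemma seg_eq (i j : ℤ) :
    seg x i j = (List.range (j - i).toNat).map (fun t : ℕ => x (i + (t : ℤ))) := by
  unfold seg
  rw [show (do let a ← List.range (j-i).toNat; pure ((a:ℤ)) : List ℤ) = (List.range (j - i).toNat).flatMap fun a => [(a:ℤ)] from by simp]
  rw [flatMap_single, List.map_map]
  rfl

lemma seg_length (i j : ℤ) : (seg x i j).length = (j - i).toNat := by
  rw [seg_eq]; simp

lemma seg_length_nat (i : ℤ) (n : ℕ) : (seg x i (i + n)).length = n := by
  rw [seg_length]; omega

lemma seg_append {i j k : ℤ} (hij : i ≤ j) (hjk : j ≤ k) :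
    seg x i j ++ seg x j k = seg x i k := by
  rw [seg_eq, seg_eq, seg_eq]
  have h1 : (k - i).toNat = (j - i).toNat + (k - j).toNat := by omega
  rw [h1, List.range_add, List.map_append, List.map_map]
  congr 1
  apply List.map_congr_left
  intro t ht
  simp only [Function.comp_apply]
  congr 1
  omega

end

section
variable {A : Type*} (x : ℤ → A)

lemma seg_drop {i j : ℤ} (m : ℕ) (hm : i + m ≤ j) :
    (seg x i j).drop m = seg x (i + m) j := by
  have h := seg_append x (by omega : i ≤ i + m) hm
  rw [← h, List.drop_left' (seg_length_nat x i m)]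

lemma seg_take {i j : ℤ} (m : ℕ) (hm : i + m ≤ j) :
    (seg x i j).take m = seg x i (i + m) := by
  have h := seg_append x (by omega : i ≤ i + m) hm
  rw [← h, List.take_left' (seg_length_nat x i m)]

lemma occ_prefix_drop {n : ℕ} {u : List A} (hn : u.length = n) (h1 : 1 ≤ n) {p q : ℤ}
    (hpq : p ≤ q) (i : ℕ) :
    u <+: (seg x p (q + n)).drop i ↔ ((i : ℤ) ≤ q - p ∧ u = seg x (p + i) (p + i + n)) := by
  by_cases hi : (i : ℤ) ≤ q - p
  · have hdrop : (seg x p (q + n)).drop i = seg x (p + i) (q + n) :=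
      seg_drop x i (by omega)
    have htake : (seg x (p + i) (q + n)).take n = seg x (p + i) (p + i + n) :=
      seg_take x n (by omega)
    rw [hdrop, List.prefix_iff_eq_take, hn, htake]
    simp [hi]
  · constructor
    · intro h
      exfalso
      have hle := h.length_le
      rw [List.length_drop, seg_length] at hle
      omega
    · intro h; exact absurd h.1 hi

lemma countP_pair {N d : ℕ} (hd : 0 < d) (hdN : d < N) :
    (List.range N).countP (fun i => decide (i = 0 ∨ i = d)) = 2 := by
  rw [List.countP_eq_length_filter]
  have hnd : ((List.range N).filter (fun i => decide (i = 0 ∨ i = d))).Nodup :=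
    (List.nodup_range (n := N)).filter _
  rw [← List.toFinset_card_of_nodup hnd]
  have : ((List.range N).filter (fun i => decide (i = 0 ∨ i = d))).toFinset = {0, d} := by
    ext a
    simp only [List.mem_toFinset, List.mem_filter, List.mem_range, decide_eq_true_eq,
      Finset.mem_insert, Finset.mem_singleton]
    omega
  rw [this, Finset.card_insert_of_notMem (by simp; omega), Finset.card_singleton]

end


section
variable {A : Type*} [DecidableEq A] (x : ℤ → A)

lemma factor_of_occ {n : ℕ} {u : List A} (hn : u.length = n) {p : ℤ}
    (hp : u = seg x p (p + n)) : FactorOf x u := ⟨p, by rw [hn]; exact hp⟩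

lemma occCount_return {n : ℕ} {u : List A} (hn : u.length = n) (h1 : 1 ≤ n) {p q : ℤ}
    (hpq : p < q) (hp : u = seg x p (p + n)) (hq : u = seg x q (q + n))
    (hmin : ∀ m : ℤ, p < m → m < q → u ≠ seg x m (m + n)) :
    occCount u (seg x p (q + n)) = 2 := by
  set d := (q - p).toNat with hd
  have hd0 : 0 < d := by omega
  have hqd : q = p + d := by omega
  have hlen : (seg x p (q + n)).length = d + n := by rw [seg_length]; omega
  unfold occCount
  rw [hlen]
  rw [List.countP_congr (q := fun i => decide (i = 0 ∨ i = d)) ?_]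
  · exact countP_pair hd0 (by omega)
  · intro i hi
    simp only [decide_eq_true_eq]
    rw [occ_prefix_drop x hn h1 (le_of_lt hpq) i]
    constructor
    · rintro ⟨hile, hocc⟩
      by_contra hcon
      push_neg at hcon
      exact hmin (p + i) (by omega) (by omega) hocc
    · rintro (rfl | rfl)
      · exact ⟨by omega, by simpa using hp⟩
      · exact ⟨by omega, by rw [← hqd]; exact hq⟩

lemma gap_le {K : ℕ} (hlr : LinRec x K) {n : ℕ} {u : List A} (hn : u.length = n) (h1 : 1 ≤ n)
    {p q : ℤ} (hpq : p < q) (hp : u = seg x p (p + n)) (hq : u = seg x q (q + n))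
    (hmin : ∀ m : ℤ, p < m → m < q → u ≠ seg x m (m + n)) :
    q - p ≤ K * n := by
  set r := seg x p q with hr
  have hrlen : r.length = (q - p).toNat := seg_length x p q
  have hru : r ++ u = seg x p (q + n) := by
    rw [hq, hr]; exact seg_append x (le_of_lt hpq) (by omega)
  have hret : ReturnWordOf x u r := by
    refine ⟨⟨p, ?_⟩, ?_, ?_⟩
    · have hl : p + (((r ++ u).length : ℕ) : ℤ) = q + n := by
        rw [List.length_append, hrlen, hn]
        push_cast
        omega
      rw [hl]
      exact hru
    · rw [hru, ← seg_append x (by omega : p ≤ p + (n:ℤ)) (by omega), ← hp]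
      exact List.prefix_append _ _
    · rw [hru]; exact occCount_return x hn h1 hpq hp hq hmin
  have := hlr.2 u r (factor_of_occ x hn hp) hret
  rw [hrlen, hn] at this
  omega

lemma exists_next (hrec : Recurrent x) {n : ℕ} {u : List A} (hn : u.length = n) (h1 : 1 ≤ n)
    {p : ℤ} (hp : u = seg x p (p + n)) :
    ∃ q : ℤ, p < q ∧ u = seg x q (q + n) ∧ ∀ m : ℤ, p < m → m < q → u ≠ seg x m (m + n) := by
  classical
  have hex : ∃ k : ℕ, u = seg x (p + 1 + k) (p + 1 + k + n) := by
    obtain ⟨i, hi, hocc⟩ := hrec u (factor_of_occ x hn hp) (p + 1)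
    refine ⟨(i - (p + 1)).toNat, ?_⟩
    rw [hn] at hocc
    have : p + 1 + ((i - (p + 1)).toNat : ℤ) = i := by omega
    rw [this]
    exact hocc
  refine ⟨p + 1 + Nat.find hex, by omega, Nat.find_spec hex, ?_⟩
  intro m hm1 hm2 hocc
  have hlt : (m - (p + 1)).toNat < Nat.find hex := by omega
  apply Nat.find_min hex hlt
  have : p + 1 + (((m - (p + 1)).toNat : ℕ) : ℤ) = m := by omega
  rw [this]
  exact hocc

end

section
variable {A : Type*} [DecidableEq A] (x : ℤ → A)

lemma occ_in_window {K : ℕ} (hlr : LinRec x K) {n : ℕ} {u : List A} (hn : u.length = n)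
    (h1 : 1 ≤ n) (i0 : ℤ) :
    ∀ p : ℤ, u = seg x p (p + n) → p ≤ i0 →
      ∃ q : ℤ, i0 ≤ q ∧ q < i0 + K * n ∧ u = seg x q (q + n) := by
  have hK1 : ∀ p : ℤ, u = seg x p (p + n) → (1 : ℤ) ≤ K * n := by
    intro p hp
    obtain ⟨q', hq'1, hq'2, hq'min⟩ := exists_next x hlr.1 hn h1 hp
    have := gap_le x hlr hn h1 hq'1 hp hq'2 hq'min
    omega
  intro p hp hi0
  obtain ⟨N, hN⟩ : ∃ N : ℕ, (i0 - p).toNat = N := ⟨_, rfl⟩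
  induction N using Nat.strong_induction_on generalizing p with
  | _ N ih =>
    rcases eq_or_lt_of_le hi0 with heq | hlt
    · exact ⟨p, by omega, by have := hK1 p hp; omega, hp⟩
    · obtain ⟨q', hq'1, hq'2, hq'min⟩ := exists_next x hlr.1 hn h1 hp
      have hgap := gap_le x hlr hn h1 hq'1 hp hq'2 hq'min
      by_cases hcase : i0 ≤ q'
      · exact ⟨q', hcase, by omega, hq'2⟩
      · push_neg at hcase
        exact ih (i0 - q').toNat (by omega) q' hq'2 (le_of_lt hcase) rfl

theorem aux_card_bound {K : ℕ} (hlr : LinRec x K) :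
    ∀ n : ℕ, 1 ≤ n → ({w : List A | FactorOf x w ∧ w.length = n}).ncard ≤ K * n := by
  intro n hn1
  classical
  set S := {w : List A | FactorOf x w ∧ w.length = n} with hS
  by_cases hfin : S.Finite
  · have hex : ∀ w : List A, ∃ p : ℤ, (w ∈ S → (0 ≤ p ∧ w = seg x p (p + n))) := by
      intro w
      by_cases h : w ∈ S
      · obtain ⟨i, hi, hw⟩ := hlr.1 w h.1 0
        exact ⟨i, fun _ => ⟨hi, by rw [h.2] at hw; exact hw⟩⟩
      · exact ⟨0, fun h' => absurd h' h⟩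
    choose f hf using hex
    set T := hfin.toFinset with hT
    set i0 : ℤ := ((T.sup fun w => (f w).toNat : ℕ) : ℤ) with hi0
    have hfle : ∀ w ∈ S, f w ≤ i0 := by
      intro w hw
      have h1' := (hf w hw).1
      have h2' : (f w).toNat ≤ T.sup fun w => (f w).toNat :=
        Finset.le_sup (f := fun w => (f w).toNat) ((hfin.mem_toFinset).2 hw)
      omega
    have hsub : S ⊆ (fun j : ℕ => seg x (i0 + j) (i0 + j + n)) '' (Set.Iio (K * n)) := by
      intro w hw
      obtain ⟨q, hq1, hq2, hq3⟩ :=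
        occ_in_window x hlr hw.2 hn1 i0 (f w) (hf w hw).2 (hfle w hw)
      refine ⟨(q - i0).toNat, by simp only [Set.mem_Iio]; omega, ?_⟩
      have hq' : i0 + (((q - i0).toNat : ℕ) : ℤ) = q := by omega
      show seg x (i0 + (((q - i0).toNat : ℕ) : ℤ)) (i0 + (((q - i0).toNat : ℕ) : ℤ) + n) = w
      rw [hq']
      exact hq3.symm
    have himg : ((fun j : ℕ => seg x (i0 + j) (i0 + j + n)) '' (Set.Iio (K * n))).Finite :=
      (Set.finite_Iio _).image _
    have hle1 := Set.ncard_le_ncard hsub himg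
    have hle2 := Set.ncard_image_le (f := fun j : ℕ => seg x (i0 + j) (i0 + j + n))
      (Set.finite_Iio (K * n))
    have h3 : (Set.Iio (K * n) : Set ℕ).ncard = K * n := by
      rw [show (Set.Iio (K * n) : Set ℕ) = ↑(Finset.range (K * n)) from (Finset.coe_range _).symm,
        Set.ncard_coe_finset, Finset.card_range]
    omega
  · rw [Set.Infinite.ncard hfin]
    exact Nat.zero_le _

end

theorem stmt8 {A : Type*} [DecidableEq A] (x : ℤ → A) (K : ℕ)
    (hap : AperiodicSeq x) (hlr : LinRec x K) :
    ∀ n : ℕ, 1 ≤ n → complexity x n ≤ K * n := by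
  intro n hn1
  have h := aux_card_bound x hlr n hn1
  simpa [complexity] using h
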